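/- Let (M,d) be a metric space, a < b real numbers, and γ_n : [a,b] → M a sequence of curves converging uniformly to γ : [a,b] → M. Suppose for each n there is an integrable f_n : [a,b] → [0,∞) with d(γ_n(s), γ_n(t)) ≤ ∫_s^t f_n(r) dr for all a ≤ s ≤ t ≤ b, and the family {f_n} is uniformly integrable. Then γ has finite total variation on [a,b], and the variation function v : [a,b] → ℝ, v(t) = total variation of γ on [a,t], is absolutely continuous: for every ε > 0 there is δ > 0 such that for pairwise disjoint open subintervals (a_1,b_1),…,(a_N,b_N) of [a,b] with Σ (b_i − a_i) < δ one has Σ (v(b_i) − v(a_i)) < ε. In particular γ itself is d-absolutely continuous. -/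

import Mathlib

open MeasureTheory Set Filter

private lemma ioc_disjoint_of_ioo {c₁ d₁ c₂ d₂ : ℝ} (h : Disjoint (Ioo c₁ d₁) (Ioo c₂ d₂)) :
    Disjoint (Ioc c₁ d₁) (Ioc c₂ d₂) := by
  rw [Set.disjoint_left]
  intro x hx1 hx2
  obtain ⟨y, hy1, hy2⟩ := exists_between (max_lt hx1.1 hx2.1)
  exact Set.disjoint_left.1 h
    ⟨lt_of_le_of_lt (le_max_left _ _) hy1, hy2.trans_le hx1.2⟩
    ⟨lt_of_le_of_lt (le_max_right _ _) hy1, hy2.trans_le hx2.2⟩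

private lemma aux_ii {f : ℝ → ℝ} {a b s t : ℝ} (hint : IntegrableOn f (Icc a b))
    (has : a ≤ s) (hst : s ≤ t) (htb : t ≤ b) : IntervalIntegrable f volume s t :=
  (hint.mono_set (by rw [uIcc_of_le hst]; exact Icc_subset_Icc has htb)).intervalIntegrable

section Aux

variable {M : Type*} [MetricSpace M] {a b : ℝ}
    {γ : ℝ → M} {γn : ℕ → ℝ → M} {f : ℕ → ℝ → ℝ}

private lemma aux_sum_dist
    (hconv : TendstoUniformlyOn γn γ atTop (Icc a b))
    (hf_nonneg : ∀ n, ∀ t ∈ Icc a b, 0 ≤ f n t)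
    (hf_int : ∀ n, IntegrableOn (f n) (Icc a b))
    (hspeed : ∀ n, ∀ s t : ℝ, a ≤ s → s ≤ t → t ≤ b →
      dist (γn n s) (γn n t) ≤ ∫ r in s..t, f n r)
    (N : ℕ) (c d : ℕ → ℝ) (hcd : ∀ i < N, a ≤ c i ∧ c i ≤ d i ∧ d i ≤ b)
    (m : ℕ → ℕ) (u : ℕ → ℕ → ℝ) (hu : ∀ i < N, Monotone (u i))
    (humem : ∀ i < N, ∀ j, u i j ∈ Icc (c i) (d i))
    (L : ℝ) (hL : ∀ n, (∑ i ∈ Finset.range N, ∫ r in (c i)..(d i), f n r) ≤ L) :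
    ∑ i ∈ Finset.range N, ∑ j ∈ Finset.range (m i), dist (γ (u i j)) (γ (u i (j+1))) ≤ L := by
  refine le_of_forall_pos_le_add fun ε hε => ?_
  set T : ℕ := ∑ i ∈ Finset.range N, m i with hT
  set ε' : ℝ := ε / (2 * T + 1) with hε'def
  have hε' : 0 < ε' := by positivity
  obtain ⟨n, hn⟩ := (Metric.tendstoUniformlyOn_iff.1 hconv ε' hε').exists
  have key : ∀ i ∈ Finset.range N,
      ∑ j ∈ Finset.range (m i), dist (γ (u i j)) (γ (u i (j+1)))
        ≤ (∫ r in (c i)..(d i), f n r) + (m i : ℝ) * (2 * ε') := by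
    intro i hi
    rw [Finset.mem_range] at hi
    obtain ⟨hac, hcd', hdb⟩ := hcd i hi
    have hmem : ∀ j, u i j ∈ Icc a b := fun j =>
      ⟨hac.trans (humem i hi j).1, (humem i hi j).2.trans hdb⟩
    have step : ∀ j ∈ Finset.range (m i), dist (γ (u i j)) (γ (u i (j+1)))
        ≤ dist (γn n (u i j)) (γn n (u i (j+1))) + 2 * ε' := by
      intro j _
      have t4 := dist_triangle4 (γ (u i j)) (γn n (u i j)) (γn n (u i (j+1))) (γ (u i (j+1)))
      have h1 := hn _ (hmem j)
      have h2 := hn _ (hmem (j+1))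
      rw [dist_comm (γn n (u i (j+1)))] at t4
      linarith
    have hii : ∀ j ∈ Finset.range (m i), IntervalIntegrable (f n) volume (u i j) (u i (j+1)) :=
      fun j _ => aux_ii (hf_int n) (hmem j).1 (hu i hi (Nat.le_succ j)) (hmem (j+1)).2
    calc ∑ j ∈ Finset.range (m i), dist (γ (u i j)) (γ (u i (j+1)))
        ≤ ∑ j ∈ Finset.range (m i),
            (dist (γn n (u i j)) (γn n (u i (j+1))) + 2 * ε') := Finset.sum_le_sum step
      _ = (∑ j ∈ Finset.range (m i), dist (γn n (u i j)) (γn n (u i (j+1))))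
            + (m i : ℝ) * (2 * ε') := by
          rw [Finset.sum_add_distrib, Finset.sum_const, Finset.card_range, nsmul_eq_mul]
      _ ≤ (∑ j ∈ Finset.range (m i), ∫ r in (u i j)..(u i (j+1)), f n r)
            + (m i : ℝ) * (2 * ε') := by
          refine add_le_add (Finset.sum_le_sum fun j _ => ?_) le_rfl
          exact hspeed n _ _ (hmem j).1 (hu i hi (Nat.le_succ j)) (hmem (j+1)).2
      _ = (∫ r in (u i 0)..(u i (m i)), f n r) + (m i : ℝ) * (2 * ε') := by
          rw [intervalIntegral.sum_integral_adjacent_intervals fun j hj =>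
            hii j (Finset.mem_range.2 hj)]
      _ ≤ (∫ r in (c i)..(d i), f n r) + (m i : ℝ) * (2 * ε') := by
          refine add_le_add (intervalIntegral.integral_mono_interval
            (humem i hi 0).1 (hu i hi (Nat.zero_le _)) (humem i hi (m i)).2
            ?_ (aux_ii (hf_int n) hac hcd' hdb)) le_rfl
          refine (ae_restrict_iff' measurableSet_Ioc).2 (Eventually.of_forall fun r hr => ?_)
          exact hf_nonneg n r ⟨hac.trans hr.1.le, hr.2.trans hdb⟩
  calc ∑ i ∈ Finset.range N, ∑ j ∈ Finset.range (m i), dist (γ (u i j)) (γ (u i (j+1)))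
      ≤ ∑ i ∈ Finset.range N, ((∫ r in (c i)..(d i), f n r) + (m i : ℝ) * (2 * ε')) :=
        Finset.sum_le_sum key
    _ = (∑ i ∈ Finset.range N, ∫ r in (c i)..(d i), f n r) + (T : ℝ) * (2 * ε') := by
        rw [Finset.sum_add_distrib, ← Finset.sum_mul, hT]
        push_cast
        ring
    _ ≤ L + ε := by
        refine add_le_add (hL n) ?_
        have h1 : (2 * (T : ℝ) + 1) * ε' = ε := by
          rw [hε'def]; field_simp
        nlinarith [hε'.le]

private lemma aux_edist_sum {mm : ℕ} (γ : ℝ → M) (u : ℕ → ℝ) :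
    (∑ j ∈ Finset.range mm, edist (γ (u (j+1))) (γ (u j)))
      = ENNReal.ofReal (∑ j ∈ Finset.range mm, dist (γ (u j)) (γ (u (j+1)))) := by
  rw [ENNReal.ofReal_sum_of_nonneg (fun _ _ => dist_nonneg)]
  exact Finset.sum_congr rfl fun j _ => by rw [edist_dist, dist_comm]

private lemma aux_evar_le
    (hconv : TendstoUniformlyOn γn γ atTop (Icc a b))
    (hf_nonneg : ∀ n, ∀ t ∈ Icc a b, 0 ≤ f n t)
    (hf_int : ∀ n, IntegrableOn (f n) (Icc a b))
    (hspeed : ∀ n, ∀ s t : ℝ, a ≤ s → s ≤ t → t ≤ b →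
      dist (γn n s) (γn n t) ≤ ∫ r in s..t, f n r)
    (s t : ℝ) (has : a ≤ s) (hst : s ≤ t) (htb : t ≤ b)
    (L : ℝ) (hL : ∀ n, (∫ r in s..t, f n r) ≤ L) :
    eVariationOn γ (Icc s t) ≤ ENNReal.ofReal L := by
  unfold eVariationOn
  refine iSup_le ?_
  rintro ⟨mm, u, hu, us⟩
  have hreal : ∑ j ∈ Finset.range mm, dist (γ (u j)) (γ (u (j+1))) ≤ L := by
    have h := aux_sum_dist hconv hf_nonneg hf_int hspeed 1 (fun _ => s) (fun _ => t)
      (fun i _ => ⟨has, hst, htb⟩) (fun _ => mm) (fun _ => u) (fun _ _ => hu)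
      (fun _ _ j => us j) L (fun n => by simpa using hL n)
    simpa using h
  calc (∑ j ∈ Finset.range mm, edist (γ (u (j+1))) (γ (u j)))
      = ENNReal.ofReal (∑ j ∈ Finset.range mm, dist (γ (u j)) (γ (u (j+1)))) :=
        aux_edist_sum γ u
    _ ≤ ENNReal.ofReal L := ENNReal.ofReal_le_ofReal hreal

private lemma aux_sum_var_le
    (hconv : TendstoUniformlyOn γn γ atTop (Icc a b))
    (hf_nonneg : ∀ n, ∀ t ∈ Icc a b, 0 ≤ f n t)
    (hf_int : ∀ n, IntegrableOn (f n) (Icc a b))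
    (hspeed : ∀ n, ∀ s t : ℝ, a ≤ s → s ≤ t → t ≤ b →
      dist (γn n s) (γn n t) ≤ ∫ r in s..t, f n r)
    (N : ℕ) (c d : ℕ → ℝ) (hcd : ∀ i < N, a ≤ c i ∧ c i ≤ d i ∧ d i ≤ b)
    (hfin : ∀ i < N, eVariationOn γ (Icc (c i) (d i)) ≠ ⊤)
    (L : ℝ) (hL : ∀ n, (∑ i ∈ Finset.range N, ∫ r in (c i)..(d i), f n r) ≤ L) :
    ∑ i ∈ Finset.range N, (eVariationOn γ (Icc (c i) (d i))).toReal ≤ L := by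
  refine le_of_forall_pos_le_add fun ε hε => ?_
  set ε' : ℝ := ε / (N + 1) with hε'def
  have hε' : 0 < ε' := by positivity
  have hchoice : ∀ i, ∃ (mi : ℕ) (ui : ℕ → ℝ), i < N →
      Monotone ui ∧ (∀ j, ui j ∈ Icc (c i) (d i)) ∧
      (eVariationOn γ (Icc (c i) (d i))).toReal ≤
        (∑ j ∈ Finset.range mi, dist (γ (ui j)) (γ (ui (j+1)))) + ε' := by
    intro i
    by_cases hi : i < N
    · obtain ⟨hac, hcd', hdb⟩ := hcd i hi
      by_cases h0 : eVariationOn γ (Icc (c i) (d i)) ≤ ENNReal.ofReal ε'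
      · refine ⟨0, fun _ => c i, fun _ => ⟨monotone_const, fun j => ⟨le_rfl, hcd'⟩, ?_⟩⟩
        simpa using ENNReal.toReal_le_of_le_ofReal hε'.le h0
      · push_neg at h0
        have hne0 : eVariationOn γ (Icc (c i) (d i)) ≠ 0 := by
          intro h; rw [h] at h0; simp at h0
        have h1 : eVariationOn γ (Icc (c i) (d i)) - ENNReal.ofReal ε'
            < eVariationOn γ (Icc (c i) (d i)) :=
          ENNReal.sub_lt_self (hfin i hi) hne0 (by simpa using hε')
        obtain ⟨p, hp⟩ := lt_iSup_iff.1
          (show eVariationOn γ (Icc (c i) (d i)) - ENNReal.ofReal ε'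
            < ⨆ p : ℕ × {u : ℕ → ℝ // Monotone u ∧ ∀ j, u j ∈ Icc (c i) (d i)},
              ∑ j ∈ Finset.range p.1, edist (γ (p.2.1 (j+1))) (γ (p.2.1 j)) from h1)
        obtain ⟨mi, ui, hui, uis⟩ := p
        refine ⟨mi, ui, fun _ => ⟨hui, uis, ?_⟩⟩
        have hsum := aux_edist_sum (mm := mi) γ ui
        have hle : eVariationOn γ (Icc (c i) (d i)) ≤
            ENNReal.ofReal ((∑ j ∈ Finset.range mi, dist (γ (ui j)) (γ (ui (j+1)))) + ε') := by
          rw [ENNReal.ofReal_add (Finset.sum_nonneg fun _ _ => dist_nonneg) hε'.le, ← hsum]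
          exact tsub_le_iff_right.1 hp.le
        exact ENNReal.toReal_le_of_le_ofReal (by positivity) hle
    · exact ⟨0, fun _ => 0, fun h => absurd h hi⟩
  choose mi ui hch using hchoice
  calc ∑ i ∈ Finset.range N, (eVariationOn γ (Icc (c i) (d i))).toReal
      ≤ ∑ i ∈ Finset.range N,
          ((∑ j ∈ Finset.range (mi i), dist (γ (ui i j)) (γ (ui i (j+1)))) + ε') :=
        Finset.sum_le_sum fun i hi => (hch i (Finset.mem_range.1 hi)).2.2
    _ = (∑ i ∈ Finset.range N, ∑ j ∈ Finset.range (mi i),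
          dist (γ (ui i j)) (γ (ui i (j+1)))) + (N : ℝ) * ε' := by
        rw [Finset.sum_add_distrib, Finset.sum_const, Finset.card_range, nsmul_eq_mul]
    _ ≤ L + ε := by
        refine add_le_add (aux_sum_dist hconv hf_nonneg hf_int hspeed N c d hcd mi ui
          (fun i hi => (hch i hi).1) (fun i hi => (hch i hi).2.1) L hL) ?_
        have h1 : ((N : ℝ) + 1) * ε' = ε := by rw [hε'def]; field_simp
        nlinarith [hε'.le]

end Aux

/-- A uniform limit of curves with uniformly integrable speed bounds has
finite total variation, the variation function is absolutely continuous, and the limit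
curve is `d`-absolutely continuous. -/
theorem stmt_1 {M : Type*} [MetricSpace M] (a b : ℝ) (hab : a < b)
    (γ : ℝ → M) (γn : ℕ → ℝ → M) (f : ℕ → ℝ → ℝ)
    (hconv : TendstoUniformlyOn γn γ atTop (Icc a b))
    (hf_nonneg : ∀ n, ∀ t ∈ Icc a b, 0 ≤ f n t)
    (hf_int : ∀ n, IntegrableOn (f n) (Icc a b))
    (hspeed : ∀ n, ∀ s t : ℝ, a ≤ s → s ≤ t → t ≤ b →
      dist (γn n s) (γn n t) ≤ ∫ r in s..t, f n r)
    (hUI : ∀ ε > (0:ℝ), ∃ δ > (0:ℝ), ∀ n, ∀ E ⊆ Icc a b, MeasurableSet E →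
      volume E < ENNReal.ofReal δ → ∫ r in E, |f n r| < ε) :
    eVariationOn γ (Icc a b) < ⊤ ∧
    (∀ ε > (0:ℝ), ∃ δ > (0:ℝ), ∀ N : ℕ, ∀ c d : ℕ → ℝ,
      (∀ i < N, a ≤ c i ∧ c i ≤ d i ∧ d i ≤ b) →
      (∀ i < N, ∀ j < N, i ≠ j → Disjoint (Ioo (c i) (d i)) (Ioo (c j) (d j))) →
      (∑ i ∈ Finset.range N, (d i - c i)) < δ →
      (∑ i ∈ Finset.range N,
        ((eVariationOn γ (Icc a (d i))).toReal - (eVariationOn γ (Icc a (c i))).toReal)) < ε) ∧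
    (∀ ε > (0:ℝ), ∃ δ > (0:ℝ), ∀ N : ℕ, ∀ c d : ℕ → ℝ,
      (∀ i < N, a ≤ c i ∧ c i ≤ d i ∧ d i ≤ b) →
      (∀ i < N, ∀ j < N, i ≠ j → Disjoint (Ioo (c i) (d i)) (Ioo (c j) (d j))) →
      (∑ i ∈ Finset.range N, (d i - c i)) < δ →
      (∑ i ∈ Finset.range N, dist (γ (c i)) (γ (d i))) < ε) := by
  -- Step A: a uniform bound on the total integrals
  obtain ⟨δ1, hδ1, hδ1'⟩ := hUI 1 one_pos
  obtain ⟨mK, hmK⟩ := exists_nat_gt ((b - a) / δ1)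
  have hba : 0 < b - a := sub_pos.2 hab
  have hmK0 : 0 < (mK : ℝ) := lt_trans (div_pos hba hδ1) hmK
  set ℓ : ℝ := (b - a) / mK with hℓdef
  have hℓpos : 0 < ℓ := div_pos hba hmK0
  have hℓδ : ℓ < δ1 := by
    rw [hℓdef, div_lt_iff₀ hmK0]
    have := (div_lt_iff₀ hδ1).1 hmK
    linarith
  set x : ℕ → ℝ := fun j => a + j * ℓ with hxdef
  have hxm : ∀ j, x j ≤ x (j+1) := by
    intro j
    simp only [hxdef]
    push_cast
    nlinarith [hℓpos]
  have hx0 : x 0 = a := by simp [hxdef]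
  have hxmK : x mK = b := by
    simp only [hxdef, hℓdef]
    field_simp
    ring
  have hxbound : ∀ j ≤ mK, a ≤ x j ∧ x j ≤ b := by
    intro j hj
    have hj' : (j : ℝ) ≤ mK := Nat.cast_le.2 hj
    constructor
    · simp only [hxdef]; nlinarith [hℓpos]
    · rw [← hxmK]
      simp only [hxdef]
      nlinarith [hℓpos]
  have hKbound : ∀ n, (∫ r in a..b, f n r) ≤ (mK : ℝ) := by
    intro n
    have hadj : ∀ j < mK, IntervalIntegrable (f n) volume (x j) (x (j+1)) := fun j hj =>
      aux_ii (hf_int n) (hxbound j hj.le).1 (hxm j) (hxbound (j+1) hj).2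
    have hsplit := intervalIntegral.sum_integral_adjacent_intervals hadj
    rw [hx0, hxmK] at hsplit
    rw [← hsplit]
    have each : ∀ j ∈ Finset.range mK, (∫ r in (x j)..(x (j+1)), f n r) ≤ 1 := by
      intro j hj
      rw [Finset.mem_range] at hj
      rw [intervalIntegral.integral_of_le (hxm j)]
      have hsub : Ioc (x j) (x (j+1)) ⊆ Icc a b :=
        Ioc_subset_Icc_self.trans (Icc_subset_Icc (hxbound j hj.le).1 (hxbound (j+1) hj).2)
      have hlen : x (j+1) - x j = ℓ := by simp only [hxdef]; push_cast; ring
      have hvol : volume (Ioc (x j) (x (j+1))) < ENNReal.ofReal δ1 := by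
        rw [Real.volume_Ioc, hlen]
        exact (ENNReal.ofReal_lt_ofReal_iff hδ1).2 hℓδ
      have habs := hδ1' n _ hsub measurableSet_Ioc hvol
      calc (∫ r in Ioc (x j) (x (j+1)), f n r)
          = ∫ r in Ioc (x j) (x (j+1)), |f n r| :=
            setIntegral_congr_fun measurableSet_Ioc
              (fun r hr => (abs_of_nonneg (hf_nonneg n r (hsub hr))).symm)
        _ ≤ 1 := habs.le
    calc (∑ j ∈ Finset.range mK, ∫ r in (x j)..(x (j+1)), f n r)
        ≤ ∑ j ∈ Finset.range mK, (1:ℝ) := Finset.sum_le_sum each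
      _ = mK := by simp
  set K : ℝ := (mK : ℝ) with hKdef
  -- nonnegativity of integrals on subintervals and subinterval bound
  have hmono_int : ∀ n, ∀ s t : ℝ, a ≤ s → s ≤ t → t ≤ b →
      (∫ r in s..t, f n r) ≤ K := by
    intro n s t has hst htb
    refine le_trans (intervalIntegral.integral_mono_interval has hst htb ?_
      (aux_ii (hf_int n) le_rfl hab.le le_rfl)) (hKbound n)
    refine (ae_restrict_iff' measurableSet_Ioc).2 (Eventually.of_forall fun r hr => ?_)
    exact hf_nonneg n r ⟨hr.1.le, hr.2⟩
  have hfinSub : ∀ s t : ℝ, a ≤ s → s ≤ t → t ≤ b →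
      eVariationOn γ (Icc s t) ≤ ENNReal.ofReal K := fun s t has hst htb =>
    aux_evar_le hconv hf_nonneg hf_int hspeed s t has hst htb K
      (fun n => hmono_int n s t has hst htb)
  have h1 : eVariationOn γ (Icc a b) < ⊤ :=
    (hfinSub a b le_rfl hab.le le_rfl).trans_lt ENNReal.ofReal_lt_top
  -- Key absolute-continuity estimate for the variation over disjoint subintervals
  have key : ∀ ε > (0:ℝ), ∃ δ > (0:ℝ), ∀ N : ℕ, ∀ c d : ℕ → ℝ,
      (∀ i < N, a ≤ c i ∧ c i ≤ d i ∧ d i ≤ b) →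
      (∀ i < N, ∀ j < N, i ≠ j → Disjoint (Ioo (c i) (d i)) (Ioo (c j) (d j))) →
      (∑ i ∈ Finset.range N, (d i - c i)) < δ →
      (∑ i ∈ Finset.range N, (eVariationOn γ (Icc (c i) (d i))).toReal) < ε := by
    intro ε hε
    obtain ⟨δ, hδpos, hδ⟩ := hUI (ε/2) (half_pos hε)
    refine ⟨δ, hδpos, fun N c d hcd hdisj hlen => ?_⟩
    have hsum_int : ∀ n, (∑ i ∈ Finset.range N, ∫ r in (c i)..(d i), f n r) ≤ ε/2 := by
      intro n
      have hmeas : ∀ i ∈ Finset.range N, MeasurableSet (Ioc (c i) (d i)) :=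
        fun _ _ => measurableSet_Ioc
      have hpair : Set.Pairwise ↑(Finset.range N) (Function.onFun Disjoint fun i => Ioc (c i) (d i)) := by
        intro i hi j hj hij
        exact ioc_disjoint_of_ioo
          (hdisj i (by simpa using hi) j (by simpa using hj) hij)
      have hEsub : (⋃ i ∈ Finset.range N, Ioc (c i) (d i)) ⊆ Icc a b := by
        refine iUnion₂_subset fun i hi => ?_
        rw [Finset.mem_range] at hi
        exact Ioc_subset_Icc_self.trans (Icc_subset_Icc (hcd i hi).1 (hcd i hi).2.2)
      have hinteg : ∀ i ∈ Finset.range N, IntegrableOn (f n) (Ioc (c i) (d i)) := by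
        intro i hi
        rw [Finset.mem_range] at hi
        exact (hf_int n).mono_set
          (Ioc_subset_Icc_self.trans (Icc_subset_Icc (hcd i hi).1 (hcd i hi).2.2))
      have hEmeas : MeasurableSet (⋃ i ∈ Finset.range N, Ioc (c i) (d i)) :=
        (Finset.range N).measurableSet_biUnion hmeas
      have hvol : volume (⋃ i ∈ Finset.range N, Ioc (c i) (d i)) < ENNReal.ofReal δ := by
        rw [measure_biUnion_finset hpair hmeas]
        calc (∑ i ∈ Finset.range N, volume (Ioc (c i) (d i)))
            = ∑ i ∈ Finset.range N, ENNReal.ofReal (d i - c i) := by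
              exact Finset.sum_congr rfl fun i _ => Real.volume_Ioc
          _ = ENNReal.ofReal (∑ i ∈ Finset.range N, (d i - c i)) :=
              (ENNReal.ofReal_sum_of_nonneg fun i hi =>
                sub_nonneg.2 (hcd i (Finset.mem_range.1 hi)).2.1).symm
          _ < ENNReal.ofReal δ := (ENNReal.ofReal_lt_ofReal_iff hδpos).2 hlen
      calc (∑ i ∈ Finset.range N, ∫ r in (c i)..(d i), f n r)
          = ∑ i ∈ Finset.range N, ∫ r in Ioc (c i) (d i), f n r :=
            Finset.sum_congr rfl fun i hi =>
              intervalIntegral.integral_of_le (hcd i (Finset.mem_range.1 hi)).2.1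
        _ = ∫ r in ⋃ i ∈ Finset.range N, Ioc (c i) (d i), f n r :=
            (integral_biUnion_finset _ hmeas hpair hinteg).symm
        _ = ∫ r in ⋃ i ∈ Finset.range N, Ioc (c i) (d i), |f n r| :=
            setIntegral_congr_fun hEmeas
              (fun r hr => (abs_of_nonneg (hf_nonneg n r (hEsub hr))).symm)
        _ ≤ ε/2 := (hδ n _ hEsub hEmeas hvol).le
    have hfin : ∀ i < N, eVariationOn γ (Icc (c i) (d i)) ≠ ⊤ := by
      intro i hi
      obtain ⟨hac, hcd', hdb⟩ := hcd i hi
      exact ((hfinSub (c i) (d i) hac hcd' hdb).trans_lt ENNReal.ofReal_lt_top).ne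
    exact lt_of_le_of_lt
      (aux_sum_var_le hconv hf_nonneg hf_int hspeed N c d hcd hfin (ε/2) hsum_int)
      (half_lt_self hε)
  refine ⟨h1, ?_, ?_⟩
  · intro ε hε
    obtain ⟨δ, hδpos, hkey⟩ := key ε hε
    refine ⟨δ, hδpos, fun N c d hcd hdisj hlen => ?_⟩
    have heq : ∀ i ∈ Finset.range N,
        (eVariationOn γ (Icc a (d i))).toReal - (eVariationOn γ (Icc a (c i))).toReal
          = (eVariationOn γ (Icc (c i) (d i))).toReal := by
      intro i hi
      rw [Finset.mem_range] at hi
      obtain ⟨hac, hcd', hdb⟩ := hcd i hi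
      have hsplit := eVariationOn.Icc_add_Icc γ (s := univ) hac hcd' (mem_univ _)
      simp only [Set.univ_inter] at hsplit
      have hf1 : eVariationOn γ (Icc a (c i)) ≠ ⊤ :=
        ((hfinSub a (c i) le_rfl hac (hcd'.trans hdb)).trans_lt ENNReal.ofReal_lt_top).ne
      have hf2 : eVariationOn γ (Icc (c i) (d i)) ≠ ⊤ :=
        ((hfinSub (c i) (d i) hac hcd' hdb).trans_lt ENNReal.ofReal_lt_top).ne
      rw [← hsplit, ENNReal.toReal_add hf1 hf2]
      ring
    rw [Finset.sum_congr rfl heq]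
    exact hkey N c d hcd hdisj hlen
  · intro ε hε
    obtain ⟨δ, hδpos, hkey⟩ := key ε hε
    refine ⟨δ, hδpos, fun N c d hcd hdisj hlen => ?_⟩
    refine lt_of_le_of_lt (Finset.sum_le_sum fun i hi => ?_) (hkey N c d hcd hdisj hlen)
    rw [Finset.mem_range] at hi
    obtain ⟨hac, hcd', hdb⟩ := hcd i hi
    have hf2 : eVariationOn γ (Icc (c i) (d i)) ≠ ⊤ :=
      ((hfinSub (c i) (d i) hac hcd' hdb).trans_lt ENNReal.ofReal_lt_top).ne
    have hedist := eVariationOn.edist_le γ (s := Icc (c i) (d i)) (x := c i) (y := d i)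
      ⟨le_rfl, hcd'⟩ ⟨hcd', le_rfl⟩
    rw [dist_edist]
    exact ENNReal.toReal_mono hf2 hedist
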